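/- Let R ∈ End(V⊗V) be an invertible solution of the Yang–Baxter equation. Suppose F ∈ End(V⊗V) is invertible and G ∈ End(V⊗V⊗V) is invertible such that Φ := G ∘ F₁₂⁻¹ and Ψ := G ∘ F₂₃⁻¹ satisfy R₁₂ Φ = Φ^{(213)} R₁₂ and R₂₃ Ψ = Ψ^{(132)} R₂₃. Then R̃ := τ(F)⁻¹ R F satisfies the Yang–Baxter equation. -/
import Mathlib


open TensorProduct

noncomputable section
variable (k V : Type*) [Field k] [AddCommGroup V] [Module k V]

/-- The flip `P : V ⊗ V → V ⊗ V`. -/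
def flipE : Module.End k (V ⊗[k] V) := (TensorProduct.comm k V V).toLinearMap

/-- `τ(X) = P X P`. -/
def tauE (X : Module.End k (V ⊗[k] V)) : Module.End k (V ⊗[k] V) :=
  flipE k V * X * flipE k V

/-- The embedding `X ↦ X₂₃` into `End(V ⊗ V ⊗ V)`. -/
def leg23 (X : Module.End k (V ⊗[k] V)) : Module.End k (V ⊗[k] (V ⊗[k] V)) :=
  LinearMap.lTensor V X

/-- The embedding `X ↦ X₁₂` into `End(V ⊗ V ⊗ V)`. -/
def leg12 (X : Module.End k (V ⊗[k] V)) : Module.End k (V ⊗[k] (V ⊗[k] V)) :=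
  (TensorProduct.assoc k V V V).toLinearMap ∘ₗ LinearMap.rTensor V X ∘ₗ
    (TensorProduct.assoc k V V V).symm.toLinearMap

/-- The flip of factors 1 and 2. -/
def P12 : Module.End k (V ⊗[k] (V ⊗[k] V)) := leg12 k V (flipE k V)

/-- The flip of factors 2 and 3. -/
def P23 : Module.End k (V ⊗[k] (V ⊗[k] V)) := leg23 k V (flipE k V)

/-- The embedding `X ↦ X₁₃`. -/
def leg13 (X : Module.End k (V ⊗[k] V)) : Module.End k (V ⊗[k] (V ⊗[k] V)) :=
  P23 k V * leg12 k V X * P23 k V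

/-- The Yang–Baxter equation `R₁₂R₁₃R₂₃ = R₂₃R₁₃R₁₂`. -/
def YB (R : Module.End k (V ⊗[k] V)) : Prop :=
  leg12 k V R * leg13 k V R * leg23 k V R = leg23 k V R * leg13 k V R * leg12 k V R

/-- `(F, G)` (with given two-sided inverses `F'`, `G'`) is a *twisting pair* for `R`:
`Φ := G F₁₂⁻¹` and `Ψ := G F₂₃⁻¹` satisfy `R₁₂ Φ = Φ^{(213)} R₁₂` and
`R₂₃ Ψ = Ψ^{(132)} R₂₃`. -/
def TwistingPair (R F F' : Module.End k (V ⊗[k] V))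
    (G G' : Module.End k (V ⊗[k] (V ⊗[k] V))) : Prop :=
  F * F' = 1 ∧ F' * F = 1 ∧ G * G' = 1 ∧ G' * G = 1 ∧
  leg12 k V R * (G * leg12 k V F') =
    (P12 k V * (G * leg12 k V F') * P12 k V) * leg12 k V R ∧
  leg23 k V R * (G * leg23 k V F') =
    (P23 k V * (G * leg23 k V F') * P23 k V) * leg23 k V R

/-! ### Auxiliary lemmas for the proof -/

private lemma mot {A : Type*} [Monoid A] {x y : A} (h : x * y = 1) (t : A) :
    x * (y * t) = t := by rw [← mul_assoc, h, one_mul]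

private lemma cancel {A : Type*} [Monoid A] {x y : A} (h : x * y = 1) {a b : A}
    (hab : y * a = y * b) : a = b := by
  have := congrArg (x * ·) hab
  simpa only [← mul_assoc, h, one_mul] using this

lemma flipE_sq : flipE k V * flipE k V = 1 := by
  apply TensorProduct.ext'
  intro x y
  simp [flipE, Module.End.mul_apply]

lemma leg23_mul (X Y : Module.End k (V ⊗[k] V)) :
    leg23 k V (X * Y) = leg23 k V X * leg23 k V Y := by
  simp only [leg23, Module.End.mul_eq_comp, LinearMap.lTensor_comp]

lemma leg23_one : leg23 k V 1 = 1 := by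
  simp only [leg23, Module.End.one_eq_id, LinearMap.lTensor_id]

lemma leg23_add (X Y : Module.End k (V ⊗[k] V)) :
    leg23 k V (X + Y) = leg23 k V X + leg23 k V Y := by
  simp only [leg23, LinearMap.lTensor_add]

lemma leg23_zero : leg23 k V (0 : Module.End k (V ⊗[k] V)) = 0 := by
  simp only [leg23, LinearMap.lTensor_zero]

lemma leg12_mul (X Y : Module.End k (V ⊗[k] V)) :
    leg12 k V (X * Y) = leg12 k V X * leg12 k V Y := by
  simp only [leg12, Module.End.mul_eq_comp, LinearMap.rTensor_comp]
  ext t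
  simp

lemma leg12_one : leg12 k V 1 = 1 := by
  simp only [leg12, Module.End.one_eq_id, LinearMap.rTensor_id]
  ext t
  simp

lemma leg12_add (X Y : Module.End k (V ⊗[k] V)) :
    leg12 k V (X + Y) = leg12 k V X + leg12 k V Y := by
  simp only [leg12, LinearMap.rTensor_add, LinearMap.add_comp, LinearMap.comp_add]

lemma leg12_zero : leg12 k V (0 : Module.End k (V ⊗[k] V)) = 0 := by
  simp only [leg12, LinearMap.rTensor_zero, LinearMap.zero_comp, LinearMap.comp_zero]

lemma leg12_flip : leg12 k V (flipE k V) = P12 k V := rfl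
lemma leg23_flip : leg23 k V (flipE k V) = P23 k V := rfl

lemma P12_sq : P12 k V * P12 k V = 1 := by
  rw [P12, ← leg12_mul, flipE_sq, leg12_one]

lemma P23_sq : P23 k V * P23 k V = 1 := by
  rw [P23, ← leg23_mul, flipE_sq, leg23_one]

lemma key [FiniteDimensional k V] (X : Module.End k (V ⊗[k] V)) :
    P12 k V * leg23 k V X * P12 k V = P23 k V * leg12 k V X * P23 k V := by
  obtain ⟨t, rfl⟩ := (homTensorHomEquiv k V V V V).surjective X
  induction t using TensorProduct.induction_on with
  | zero =>
      simp only [map_zero, leg12_zero, leg23_zero, mul_zero, zero_mul]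
  | tmul A B =>
      rw [homTensorHomEquiv_apply, TensorProduct.homTensorHomMap_apply]
      apply TensorProduct.ext'
      intro x yz
      induction yz using TensorProduct.induction_on with
      | zero => simp
      | tmul y z =>
          simp [P12, P23, leg12, leg23, flipE, Module.End.mul_apply]
      | add u v hu hv =>
          simp only [TensorProduct.tmul_add, map_add, hu, hv]
  | add u v hu hv =>
      simp only [map_add, leg12_add, leg23_add, mul_add, add_mul, hu, hv]

section Braid
variable [FiniteDimensional k V]

omit [FiniteDimensional k V] in
lemma c1 (S : Module.End k (V ⊗[k] V)) :
    leg12 k V S * P23 k V = P23 k V * leg13 k V S := by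
  rw [leg13, ← mul_assoc, ← mul_assoc, P23_sq, one_mul]

lemma c2 (S : Module.End k (V ⊗[k] V)) :
    leg23 k V S * P12 k V = P12 k V * leg13 k V S := by
  rw [leg13, ← key, ← mul_assoc, ← mul_assoc, P12_sq, one_mul]

lemma c3 (S : Module.End k (V ⊗[k] V)) :
    leg13 k V S * P12 k V = P12 k V * leg23 k V S := by
  rw [leg13, ← key, mul_assoc, P12_sq, mul_one]

omit [FiniteDimensional k V] in
lemma c4 (S : Module.End k (V ⊗[k] V)) :
    leg13 k V S * P23 k V = P23 k V * leg12 k V S := by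
  rw [leg13, mul_assoc, P23_sq, mul_one]

lemma hexagon : P12 k V * P23 k V * P12 k V = P23 k V * P12 k V * P23 k V := by
  have h := key k V (flipE k V)
  rwa [leg23_flip, leg12_flip] at h

lemma yb_iff_braid (S : Module.End k (V ⊗[k] V)) :
    YB k V S ↔
      (P12 k V * leg12 k V S) * (P23 k V * leg23 k V S) * (P12 k V * leg12 k V S)
        = (P23 k V * leg23 k V S) * (P12 k V * leg12 k V S) * (P23 k V * leg23 k V S) := by
  have m1 : ∀ t, leg12 k V S * (P23 k V * t) = P23 k V * (leg13 k V S * t) := fun t => by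
    rw [← mul_assoc, c1, mul_assoc]
  have m2 : ∀ t, leg23 k V S * (P12 k V * t) = P12 k V * (leg13 k V S * t) := fun t => by
    rw [← mul_assoc, c2, mul_assoc]
  have m3 : ∀ t, leg13 k V S * (P12 k V * t) = P12 k V * (leg23 k V S * t) := fun t => by
    rw [← mul_assoc, c3, mul_assoc]
  have m4 : ∀ t, leg13 k V S * (P23 k V * t) = P23 k V * (leg12 k V S * t) := fun t => by
    rw [← mul_assoc, c4, mul_assoc]
  have hex : ∀ t, P12 k V * (P23 k V * (P12 k V * t))
      = P23 k V * (P12 k V * (P23 k V * t)) := fun t => by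
    have := congrArg (· * t) (hexagon k V)
    simpa only [mul_assoc] using this
  have hL : (P12 k V * leg12 k V S) * (P23 k V * leg23 k V S) * (P12 k V * leg12 k V S)
      = P12 k V * (P23 k V * (P12 k V * (leg23 k V S * (leg13 k V S * leg12 k V S)))) := by
    simp only [mul_assoc]
    rw [m1, m2, m3]
  have hR : (P23 k V * leg23 k V S) * (P12 k V * leg12 k V S) * (P23 k V * leg23 k V S)
      = P23 k V * (P12 k V * (P23 k V * (leg12 k V S * (leg13 k V S * leg23 k V S)))) := by
    simp only [mul_assoc]
    rw [m2, m1, m4]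
  rw [hL, hR, hex]
  unfold YB
  constructor
  · intro h
    simp only [mul_assoc] at h
    rw [← h]
  · intro h
    have a1 := cancel (P23_sq k V) h
    have a2 := cancel (P12_sq k V) a1
    have a3 := cancel (P23_sq k V) a2
    simp only [mul_assoc]
    exact a3.symm

end Braid

private lemma conj3 {A : Type*} [Monoid A] (G G' X X' Y Y' b c : A)
    (hGG' : G * G' = 1) (hG'G : G' * G = 1)
    (hX'X : X' * X = 1) (hY'Y : Y' * Y = 1)
    (hb : (G * X') * b = b * (G * X'))
    (hc : (G * Y') * c = c * (G * Y')) :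
    (X' * (b * X)) * (Y' * (c * Y)) * (X' * (b * X)) = G' * (b * (c * (b * G))) := by
  obtain ⟨q, hq0⟩ : ∃ q, q = G * X' := ⟨_, rfl⟩
  obtain ⟨p, hp0⟩ : ∃ p, p = X * G' := ⟨_, rfl⟩
  obtain ⟨s, hs0⟩ : ∃ s, s = G * Y' := ⟨_, rfl⟩
  obtain ⟨r, hr0⟩ : ∃ r, r = Y * G' := ⟨_, rfl⟩
  have hqp : q * p = 1 := by
    rw [hq0, hp0, mul_assoc, ← mul_assoc X' X G', hX'X, one_mul, hGG']
  have hsr : s * r = 1 := by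
    rw [hs0, hr0, mul_assoc, ← mul_assoc Y' Y G', hY'Y, one_mul, hGG']
  have hbq : q * b = b * q := by rw [hq0]; exact hb
  have hcs : s * c = c * s := by rw [hs0]; exact hc
  have heX : X = p * G := by rw [hp0, mul_assoc, hG'G, mul_one]
  have heX' : X' = G' * q := by rw [hq0, ← mul_assoc, hG'G, one_mul]
  have heY : Y = r * G := by rw [hr0, mul_assoc, hG'G, mul_one]
  have heY' : Y' = G' * s := by rw [hs0, ← mul_assoc, hG'G, one_mul]
  have mq : ∀ t, q * (b * (p * t)) = b * t := fun t => by
    rw [← mul_assoc, hbq, mul_assoc, mot hqp]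
  have ms : ∀ t, s * (c * (r * t)) = c * t := fun t => by
    rw [← mul_assoc, hcs, mul_assoc, mot hsr]
  rw [heX, heX', heY, heY']
  simp only [mul_assoc]
  rw [mot hGG', mot hGG', mq, ms, mq]

/-- a twisting pair `(F, G)` for an invertible solution `R` of YBE
produces a new solution `R̃ = τ(F)⁻¹ R F` of YBE. -/
theorem twistingPair_yang_baxter [FiniteDimensional k V]
    (R R' F F' : Module.End k (V ⊗[k] V))
    (G G' : Module.End k (V ⊗[k] (V ⊗[k] V)))
    (hR : R * R' = 1) (hR' : R' * R = 1)
    (hYB : YB k V R)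
    (hTP : TwistingPair k V R F F' G G') :
    YB k V (tauE k V F' * R * F) := by
  obtain ⟨hFF', hF'F, hGG', hG'G, h12, h23⟩ := hTP
  have hbraid := (yb_iff_braid k V R).mp hYB
  have hc1 : (G * leg12 k V F') * (P12 k V * leg12 k V R)
      = (P12 k V * leg12 k V R) * (G * leg12 k V F') := by
    simp only [mul_assoc] at h12 ⊢
    rw [h12, mot (P12_sq k V)]
  have hc2 : (G * leg23 k V F') * (P23 k V * leg23 k V R)
      = (P23 k V * leg23 k V R) * (G * leg23 k V F') := by
    simp only [mul_assoc] at h23 ⊢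
    rw [h23, mot (P23_sq k V)]
  have e12 : P12 k V * leg12 k V (tauE k V F' * R * F)
      = leg12 k V F' * ((P12 k V * leg12 k V R) * leg12 k V F) := by
    simp only [tauE, leg12_mul, leg12_flip, mul_assoc]
    rw [mot (P12_sq k V)]
  have e23 : P23 k V * leg23 k V (tauE k V F' * R * F)
      = leg23 k V F' * ((P23 k V * leg23 k V R) * leg23 k V F) := by
    simp only [tauE, leg23_mul, leg23_flip, mul_assoc]
    rw [mot (P23_sq k V)]
  have h12F : leg12 k V F' * leg12 k V F = 1 := by rw [← leg12_mul, hF'F, leg12_one]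
  have h23F : leg23 k V F' * leg23 k V F = 1 := by rw [← leg23_mul, hF'F, leg23_one]
  rw [yb_iff_braid, e12, e23]
  generalize hB1 : P12 k V * leg12 k V R = b1 at hbraid hc1 ⊢
  generalize hB2 : P23 k V * leg23 k V R = b2 at hbraid hc2 ⊢
  rw [conj3 G G' (leg12 k V F) (leg12 k V F') (leg23 k V F) (leg23 k V F') b1 b2
        hGG' hG'G h12F h23F hc1 hc2,
      conj3 G G' (leg23 k V F) (leg23 k V F') (leg12 k V F) (leg12 k V F') b2 b1
        hGG' hG'G h23F h12F hc2 hc1]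
  have h2 : G' * (b1 * b2 * b1) * G = G' * (b2 * b1 * b2) * G := by rw [hbraid]
  simp only [mul_assoc] at h2
  exact h2
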